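/- Let n ≥ 2, let 𝒜 ⊆ S^n be finite, and let Q ∈ S^n. Assume that the function u ↦ q(u,Q) is convex on ℝ^{n-1} and that for every A ∈ 𝒜 the function u ↦ q(u,A) is concave on ℝ^{n-1}. If the problem inf{⟨Q,X⟩ : X ∈ S^n_+, ⟨A,X⟩ ≥ 0 for all A ∈ 𝒜, X_{nn} = 1} has an optimal solution, then it has a rank-1 optimal solution, i.e., there exists x ∈ ℝ^n with x·xᵀ positive semidefinite, ⟨A, x·xᵀ⟩ ≥ 0 for all A ∈ 𝒜, (x·xᵀ)_{nn} = 1, and ⟨Q, x·xᵀ⟩ ≤ ⟨Q, X⟩ for every feasible X. -/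

import Mathlib

open Matrix

noncomputable section

/-- `q(u,A) = (u;1)ᵀ A (u;1)`. -/
def qf {m : ℕ} (A : Matrix (Fin (m+1)) (Fin (m+1)) ℝ) (u : Fin m → ℝ) : ℝ :=
  dotProduct (Fin.snoc u 1) (A.mulVec (Fin.snoc u 1))

section Aux

lemma psd_of_quad {n : Type*} [Fintype n] {M : Matrix n n ℝ}
    (hsym : Mᵀ = M) (h : ∀ v, 0 ≤ v ⬝ᵥ M.mulVec v) : M.PosSemidef := by
  refine Matrix.posSemidef_iff_dotProduct_mulVec.mpr ⟨?_, fun v => ?_⟩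
  · ext i j; simpa [Matrix.conjTranspose_apply] using congrFun (congrFun hsym i) j
  · simpa using h v

lemma trace_nonneg_of_psd {n : Type*} [Fintype n] [DecidableEq n] {M : Matrix n n ℝ}
    (hM : M.PosSemidef) : 0 ≤ M.trace := by
  have : ∀ i, 0 ≤ M i i := fun i => by
    have := hM.dotProduct_mulVec_nonneg (Pi.single i 1)
    simpa [Matrix.mulVec_single, dotProduct, Pi.single_apply] using this
  exact Finset.sum_nonneg fun i _ => this i

lemma trace_mul_nonneg_of_psd {n : Type*} [Fintype n] [DecidableEq n]
    {B N : Matrix n n ℝ} (hB : B.PosSemidef) (hN : N.PosSemidef) :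
    0 ≤ (B * N).trace := by
  obtain ⟨C, hC⟩ : ∃ C : Matrix n n ℝ, N = Cᴴ * C := by
    open scoped MatrixOrder in exact CStarAlgebra.nonneg_iff_eq_star_mul_self.mp hN.nonneg
  have h2 : (B * N).trace = (C * B * Cᴴ).trace := by
    rw [hC, ← Matrix.mul_assoc, Matrix.trace_mul_cycle]
  rw [h2]
  have h3 : (C * B * Cᴴ).PosSemidef := by
    simpa using hB.mul_mul_conjTranspose_same C
  exact trace_nonneg_of_psd h3

variable {m : ℕ}

lemma snoc_dot_snoc (a b : Fin m → ℝ) (s t : ℝ) :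
    (Fin.snoc a s : Fin (m+1) → ℝ) ⬝ᵥ (Fin.snoc b t) = a ⬝ᵥ b + s * t := by
  simp [dotProduct, Fin.sum_univ_castSucc]

lemma mulVec_snoc_castSucc (A : Matrix (Fin (m+1)) (Fin (m+1)) ℝ)
    (v : Fin m → ℝ) (t : ℝ) (i : Fin m) :
    A.mulVec (Fin.snoc v t) i.castSucc
      = (A.submatrix Fin.castSucc Fin.castSucc).mulVec v i + t * A i.castSucc (Fin.last m) := by
  simp [Matrix.mulVec, dotProduct, Fin.sum_univ_castSucc, mul_comm]

lemma mulVec_snoc_last (A : Matrix (Fin (m+1)) (Fin (m+1)) ℝ)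
    (v : Fin m → ℝ) (t : ℝ) :
    A.mulVec (Fin.snoc v t) (Fin.last m)
      = (∑ j, A (Fin.last m) j.castSucc * v j) + t * A (Fin.last m) (Fin.last m) := by
  simp [Matrix.mulVec, dotProduct, Fin.sum_univ_castSucc, mul_comm]

lemma quad_snoc_zero_rc {N : Matrix (Fin (m+1)) (Fin (m+1)) ℝ}
    (hc : ∀ i, N i (Fin.last m) = 0) (hr : ∀ j, N (Fin.last m) j = 0)
    (v : Fin m → ℝ) (t : ℝ) :
    (Fin.snoc v t : Fin (m+1) → ℝ) ⬝ᵥ N.mulVec (Fin.snoc v t)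
      = v ⬝ᵥ (N.submatrix Fin.castSucc Fin.castSucc).mulVec v := by
  rw [show N.mulVec (Fin.snoc v t)
      = Fin.snoc ((N.submatrix Fin.castSucc Fin.castSucc).mulVec v) 0 from ?_]
  · rw [snoc_dot_snoc]; ring
  · ext i
    refine Fin.lastCases ?_ (fun i => ?_) i
    · simp [mulVec_snoc_last, hr]
    · simp [mulVec_snoc_castSucc, hc]

lemma quad_snoc_zero (A : Matrix (Fin (m+1)) (Fin (m+1)) ℝ) (v : Fin m → ℝ) :
    (Fin.snoc v 0 : Fin (m+1) → ℝ) ⬝ᵥ A.mulVec (Fin.snoc v 0)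
      = v ⬝ᵥ (A.submatrix Fin.castSucc Fin.castSucc).mulVec v := by
  have h := mulVec_snoc_castSucc A v 0
  rw [show (Fin.snoc v 0 : Fin (m+1) → ℝ) ⬝ᵥ A.mulVec (Fin.snoc v 0)
      = ∑ i, v i * A.mulVec (Fin.snoc v 0) i.castSucc from ?_]
  · simp [h, dotProduct]
  · simp [dotProduct, Fin.sum_univ_castSucc]

lemma trace_mul_zero_rc (A : Matrix (Fin (m+1)) (Fin (m+1)) ℝ)
    {N : Matrix (Fin (m+1)) (Fin (m+1)) ℝ}
    (hc : ∀ i, N i (Fin.last m) = 0) (hr : ∀ j, N (Fin.last m) j = 0) :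
    (A * N).trace = ((A.submatrix Fin.castSucc Fin.castSucc) *
      (N.submatrix Fin.castSucc Fin.castSucc)).trace := by
  simp only [Matrix.trace, Matrix.diag, Matrix.mul_apply, Matrix.submatrix_apply]
  rw [Fin.sum_univ_castSucc]
  simp [Fin.sum_univ_castSucc, hc, hr]

lemma trace_mul_vecMulVec (A : Matrix (Fin (m+1)) (Fin (m+1)) ℝ) (x : Fin (m+1) → ℝ) :
    (A * vecMulVec x x).trace = x ⬝ᵥ A.mulVec x := by
  simp only [Matrix.trace, Matrix.diag, Matrix.mul_apply, Matrix.vecMulVec_apply,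
    dotProduct, Matrix.mulVec]
  refine Finset.sum_congr rfl fun i _ => ?_
  rw [Finset.mul_sum]
  exact Finset.sum_congr rfl fun j _ => by ring

lemma quad_vecMulVec (x w : Fin (m+1) → ℝ) :
    w ⬝ᵥ (vecMulVec x x).mulVec w = (x ⬝ᵥ w)^2 := by
  have h : (vecMulVec x x).mulVec w = (x ⬝ᵥ w) • x := by
    ext i
    simp [Matrix.mulVec, Matrix.vecMulVec_apply, dotProduct, Finset.mul_sum,
      Finset.sum_mul, mul_assoc]
    exact Finset.sum_congr rfl fun j _ => by ring
  rw [h]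
  simp [dotProduct_smul, dotProduct_comm x w]
  ring

lemma vecMulVec_psd (x : Fin (m+1) → ℝ) : (vecMulVec x x).PosSemidef := by
  refine psd_of_quad ?_ fun v => ?_
  · ext i j; simp [Matrix.vecMulVec_apply, mul_comm]
  · rw [quad_vecMulVec]; exact sq_nonneg _

lemma snoc_split (v : Fin m → ℝ) :
    (Fin.snoc v 1 : Fin (m+1) → ℝ) = Fin.snoc v 0 + Fin.snoc (0 : Fin m → ℝ) 1 := by
  ext i; refine Fin.lastCases ?_ (fun k => ?_) i <;> simp

lemma snoc_split_neg (v : Fin m → ℝ) :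
    (Fin.snoc (-v) 1 : Fin (m+1) → ℝ) = -(Fin.snoc v 0) + Fin.snoc (0 : Fin m → ℝ) 1 := by
  ext i; refine Fin.lastCases ?_ (fun k => ?_) i <;> simp

lemma qf_key (A : Matrix (Fin (m+1)) (Fin (m+1)) ℝ) (v : Fin m → ℝ) :
    qf A v + qf A (-v) - 2 * qf A 0
      = 2 * (v ⬝ᵥ (A.submatrix Fin.castSucc Fin.castSucc).mulVec v) := by
  rw [← quad_snoc_zero]
  simp only [qf]
  rw [snoc_split v, snoc_split_neg v]
  simp only [Matrix.mulVec_add, Matrix.mulVec_neg, dotProduct_add,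
    add_dotProduct, neg_dotProduct, dotProduct_neg]
  ring

lemma block_psd_of_convex {A : Matrix (Fin (m+1)) (Fin (m+1)) ℝ}
    (hconv : ConvexOn ℝ Set.univ (fun u : Fin m → ℝ => qf A u)) (v : Fin m → ℝ) :
    0 ≤ v ⬝ᵥ (A.submatrix Fin.castSucc Fin.castSucc).mulVec v := by
  have hcv := hconv.2 (Set.mem_univ v) (Set.mem_univ (-v))
    (by norm_num : (0:ℝ) ≤ 1/2) (by norm_num : (0:ℝ) ≤ 1/2) (by norm_num)
  have h0 : (1/2 : ℝ) • v + (1/2 : ℝ) • (-v) = 0 := by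
    rw [smul_neg]; exact add_neg_cancel _
  rw [h0] at hcv
  simp only [smul_eq_mul] at hcv
  have hk := qf_key A v
  linarith

lemma block_nsd_of_concave {A : Matrix (Fin (m+1)) (Fin (m+1)) ℝ}
    (hconc : ConcaveOn ℝ Set.univ (fun u : Fin m → ℝ => qf A u)) (v : Fin m → ℝ) :
    v ⬝ᵥ (A.submatrix Fin.castSucc Fin.castSucc).mulVec v ≤ 0 := by
  have hcv := hconc.2 (Set.mem_univ v) (Set.mem_univ (-v))
    (by norm_num : (0:ℝ) ≤ 1/2) (by norm_num : (0:ℝ) ≤ 1/2) (by norm_num)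
  have h0 : (1/2 : ℝ) • v + (1/2 : ℝ) • (-v) = 0 := by
    rw [smul_neg]; exact add_neg_cancel _
  rw [h0] at hcv
  simp only [smul_eq_mul] at hcv
  have hk := qf_key A v
  linarith

end Aux

/-- exactness of the SDP relaxation of a convex QCQP.  Matrices
have size `n = m+1` with `m ≥ 1`, i.e. `n ≥ 2`; the last coordinate plays the
role of the index `n`. -/
theorem stmt_13 (m : ℕ) (hm : 1 ≤ m)
    (𝒜 : Set (Matrix (Fin (m+1)) (Fin (m+1)) ℝ)) (h𝒜fin : 𝒜.Finite)
    (h𝒜sym : ∀ A ∈ 𝒜, A.IsSymm)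
    (Q : Matrix (Fin (m+1)) (Fin (m+1)) ℝ) (hQsym : Q.IsSymm)
    (hQconv : ConvexOn ℝ Set.univ (fun u : Fin m → ℝ => qf Q u))
    (hAconc : ∀ A ∈ 𝒜, ConcaveOn ℝ Set.univ (fun u : Fin m → ℝ => qf A u))
    (hopt : ∃ Xs : Matrix (Fin (m+1)) (Fin (m+1)) ℝ,
      (Xs.PosSemidef ∧ (∀ A ∈ 𝒜, 0 ≤ (A * Xs).trace) ∧
        Xs (Fin.last m) (Fin.last m) = 1) ∧
      ∀ X : Matrix (Fin (m+1)) (Fin (m+1)) ℝ, X.PosSemidef →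
        (∀ A ∈ 𝒜, 0 ≤ (A * X).trace) → X (Fin.last m) (Fin.last m) = 1 →
        (Q * Xs).trace ≤ (Q * X).trace) :
    ∃ x : Fin (m+1) → ℝ, (vecMulVec x x).PosSemidef ∧
      (∀ A ∈ 𝒜, 0 ≤ (A * vecMulVec x x).trace) ∧
      (vecMulVec x x) (Fin.last m) (Fin.last m) = 1 ∧
      ∀ X : Matrix (Fin (m+1)) (Fin (m+1)) ℝ, X.PosSemidef →
        (∀ A ∈ 𝒜, 0 ≤ (A * X).trace) → X (Fin.last m) (Fin.last m) = 1 →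
        (Q * vecMulVec x x).trace ≤ (Q * X).trace := by
  obtain ⟨Xs, ⟨hPSD, hfeas, hnn⟩, hoptXs⟩ := hopt
  have hXsymm : ∀ i j, Xs i j = Xs j i := fun i j => by
    have h := congrFun (congrFun hPSD.1 j) i
    simpa [Matrix.conjTranspose_apply] using h
  set u : Fin m → ℝ := fun i => Xs i.castSucc (Fin.last m) with hu
  set x : Fin (m+1) → ℝ := Fin.snoc u 1 with hxdef
  set P : Matrix (Fin (m+1)) (Fin (m+1)) ℝ := vecMulVec x x with hP
  set N : Matrix (Fin (m+1)) (Fin (m+1)) ℝ := Xs - P with hN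
  have hx_last : x (Fin.last m) = 1 := by simp [hxdef]
  have hx_cast : ∀ k : Fin m, x k.castSucc = u k := fun k => by simp [hxdef]
  have hNc : ∀ i, N i (Fin.last m) = 0 := by
    intro i
    refine Fin.lastCases ?_ (fun k => ?_) i
    · simp [hN, hP, Matrix.sub_apply, Matrix.vecMulVec_apply, hx_last, hnn]
    · simp [hN, hP, Matrix.sub_apply, Matrix.vecMulVec_apply, hx_last, hx_cast, hu]
  have hNsym : ∀ i j, N i j = N j i := fun i j => by
    simp [hN, hP, Matrix.sub_apply, Matrix.vecMulVec_apply, hXsymm i j, mul_comm]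
  have hNr : ∀ j, N (Fin.last m) j = 0 := fun j => (hNsym _ _).trans (hNc j)
  -- N₀ is PSD
  have hN0psd : (N.submatrix Fin.castSucc Fin.castSucc).PosSemidef := by
    refine psd_of_quad ?_ fun v => ?_
    · ext i j
      simp only [Matrix.transpose_apply, Matrix.submatrix_apply]
      exact hNsym _ _
    · set c : ℝ := u ⬝ᵥ v with hc
      set w : Fin (m+1) → ℝ := Fin.snoc v (-c) with hw
      have h1 : v ⬝ᵥ (N.submatrix Fin.castSucc Fin.castSucc).mulVec v
          = w ⬝ᵥ N.mulVec w := (quad_snoc_zero_rc hNc hNr v (-c)).symm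
      have hxw : x ⬝ᵥ w = 0 := by
        rw [hxdef, hw, snoc_dot_snoc]
        simp [hc, dotProduct]
      have h2 : w ⬝ᵥ N.mulVec w = w ⬝ᵥ Xs.mulVec w - (x ⬝ᵥ w)^2 := by
        rw [hN, Matrix.sub_mulVec, dotProduct_sub, quad_vecMulVec]
      have h3 : 0 ≤ w ⬝ᵥ Xs.mulVec w := by simpa using hPSD.dotProduct_mulVec_nonneg w
      rw [h1, h2, hxw]
      simpa using h3
  -- block signs
  have hQ0psd : (Q.submatrix Fin.castSucc Fin.castSucc).PosSemidef := by
    refine psd_of_quad ?_ (block_psd_of_convex hQconv)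
    ext i j
    simp only [Matrix.transpose_apply, Matrix.submatrix_apply]
    exact hQsym.apply _ _
  have hA0psd : ∀ A ∈ 𝒜, (-(A.submatrix Fin.castSucc Fin.castSucc)).PosSemidef := by
    intro A hA
    refine psd_of_quad ?_ fun v => ?_
    · ext i j
      simp only [Matrix.transpose_apply, Matrix.neg_apply, Matrix.submatrix_apply]
      rw [(h𝒜sym A hA).apply]
    · have h := block_nsd_of_concave (hAconc A hA) v
      rw [Matrix.neg_mulVec, dotProduct_neg]
      linarith
  -- trace of A * N
  have htrN : ∀ B : Matrix (Fin (m+1)) (Fin (m+1)) ℝ, (B * N).trace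
      = ((B.submatrix Fin.castSucc Fin.castSucc) * (N.submatrix Fin.castSucc Fin.castSucc)).trace :=
    fun B => trace_mul_zero_rc B hNc hNr
  have hQN : 0 ≤ (Q * N).trace := by
    rw [htrN Q]; exact trace_mul_nonneg_of_psd hQ0psd hN0psd
  have hAN : ∀ A ∈ 𝒜, (A * N).trace ≤ 0 := by
    intro A hA
    have h := trace_mul_nonneg_of_psd (hA0psd A hA) hN0psd
    rw [Matrix.neg_mul, Matrix.trace_neg] at h
    rw [htrN A]
    linarith
  -- trace splitting
  have hsplit : ∀ B : Matrix (Fin (m+1)) (Fin (m+1)) ℝ,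
      (B * Xs).trace = (B * P).trace + (B * N).trace := by
    intro B
    rw [hN, Matrix.mul_sub, Matrix.trace_sub]
    ring
  refine ⟨x, vecMulVec_psd x, fun A hA => ?_, ?_, fun X hX1 hX2 hX3 => ?_⟩
  · have h1 := hfeas A hA
    have h2 := hAN A hA
    have h3 := hsplit A
    rw [← hP]
    linarith
  · simp [hP, Matrix.vecMulVec_apply, hx_last]
  · have h1 := hoptXs X hX1 hX2 hX3
    have h3 := hsplit Q
    rw [← hP]
    linarith
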